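/- Let S = R × B₁ × ⋯ × B_m × Z₁ × ⋯ × Zₙ with m, n ≥ 0 and m + n ≥ 1 and mn ≠ 0 excluded appropriately (i.e., not both m = 0 and n = 0), where R is a finite commutative antinegative semiring with |R| ≥ 3 and |Z(R)| = 1, each Bᵢ is the Boolean semiring, and each Zⱼ is a finite commutative antinegative semiring with Z(Zⱼ) closed under addition, |Zⱼ| ≥ 3, |Zⱼ \ Z(Zⱼ)| = 1. Then dim(Γ₁(S)) = |S| − 2^{m+n+1} − |R| + 3 = |Z(S)| − 2^{m+n+1} + 2. -/

import Mathlib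

/-- `x` is a zero-divisor of the commutative semiring `S`. -/
def IsZD {S : Type*} [CommSemiring S] (x : S) : Prop :=
  ∃ y : S, y ≠ 0 ∧ x * y = 0

/-- The total graph of a commutative semiring: distinct `x, y` are adjacent
iff `x + y` is a zero-divisor. -/
def totalGraph (S : Type*) [CommSemiring S] : SimpleGraph S where
  Adj x y := x ≠ y ∧ IsZD (x + y)
  symm := by
    constructor
    intro x y h
    exact ⟨h.1.symm, by rw [add_comm]; exact h.2⟩
  loopless := by constructor; intro x h; exact h.1 rfl

/-- The induced subgraph of the total graph on the set of zero-divisors. -/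
def gamma1 (S : Type*) [CommSemiring S] : SimpleGraph {x : S // IsZD x} :=
  SimpleGraph.comap Subtype.val (totalGraph S)

/-- A resolving set: distinct vertices have distinct distance vectors to `W`. -/
def IsResolving {V : Type*} (G : SimpleGraph V) (W : Set V) : Prop :=
  ∀ x y : V, (∀ w ∈ W, G.dist x w = G.dist y w) → x = y

/-- The metric dimension: the least cardinality of a resolving set. -/
noncomputable def metricDim {V : Type*} (G : SimpleGraph V) : ℕ :=
  sInf {k | ∃ W : Set V, W.Finite ∧ W.ncard = k ∧ IsResolving G W}

/-- The Boolean semiring `𝔹 = {0,1}` with `1 + 1 = 1`. -/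
inductive BB : Type
  | zero : BB
  | one : BB
deriving DecidableEq

instance : Zero BB := ⟨.zero⟩
instance : One BB := ⟨.one⟩
instance : Add BB := ⟨fun x y => match x, y with | .zero, y => y | .one, _ => .one⟩
instance : Mul BB := ⟨fun x y => match x, y with | .zero, _ => .zero | .one, y => y⟩
instance : Fintype BB := ⟨{.zero, .one}, by intro x; cases x <;> decide⟩

instance : CommSemiring BB where
  add_assoc := by decide
  zero_add := by decide
  add_zero := by decide
  add_comm := by decide
  mul_assoc := by decide
  one_mul := by decide
  mul_one := by decide
  left_distrib := by decide
  right_distrib := by decide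
  zero_mul := by decide
  mul_zero := by decide
  mul_comm := by decide
  nsmul := nsmulRec
  npow := npowRec

namespace S16

lemma not_isZD_one {S : Type*} [CommSemiring S] : ¬ IsZD (1 : S) :=
  fun ⟨y, hy, h⟩ => hy (by simpa using h)

instance : Nontrivial BB := ⟨⟨0, 1, by decide⟩⟩

lemma bb_isZD (x : BB) : IsZD x ↔ x = 0 := by
  constructor
  · intro h
    cases x with
    | zero => rfl
    | one => exact absurd h not_isZD_one
  · rintro rfl; exact ⟨1, one_ne_zero, zero_mul 1⟩

lemma bb_anti : ∀ a b : BB, a + b = 0 → a = 0 ∧ b = 0 := by decide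

lemma not_isZD_iff {S : Type*} [CommSemiring S] {x : S} :
    ¬ IsZD x ↔ ∀ y : S, x * y = 0 → y = 0 := by
  unfold IsZD; push_neg
  exact ⟨fun h y hy => by by_contra h0; exact (h y h0) hy, fun h y hy hxy => hy (h y hxy)⟩

lemma isZD_zero {S : Type*} [CommSemiring S] [Nontrivial S] : IsZD (0 : S) :=
  ⟨1, one_ne_zero, zero_mul 1⟩

lemma not_isZD_one_add {S : Type*} [CommSemiring S]
    (anti : ∀ a b : S, a + b = 0 → a = 0 ∧ b = 0) (z : S) : ¬ IsZD (1 + z) := by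
  rintro ⟨y, hy, h⟩
  rw [add_mul, one_mul] at h
  exact hy (anti _ _ h).1

lemma isZD_map {S T : Type*} [CommSemiring S] [CommSemiring T] (e : S ≃+* T) {x : S}
    (h : IsZD x) : IsZD (e x) := by
  obtain ⟨y, hy, hxy⟩ := h
  refine ⟨e y, fun h0 => hy ?_, by rw [← map_mul, hxy, map_zero]⟩
  apply e.injective; rw [h0, map_zero]

lemma isZD_map_iff {S T : Type*} [CommSemiring S] [CommSemiring T] (e : S ≃+* T) {x : S} :
    IsZD (e x) ↔ IsZD x :=
  ⟨fun h => by simpa using isZD_map e.symm h, isZD_map e⟩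



structure Facts (m n : ℕ) (R : Type*) [CommSemiring R] (B : Fin m → Type*)
    [∀ i, CommSemiring (B i)] (Z : Fin n → Type*) [∀ j, CommSemiring (Z j)] : Prop where
  hR0 : ∀ r : R, IsZD r ↔ r = 0
  hR1 : (1 : R) ≠ 0
  hR2 : ∃ r₁ r₂ : R, r₁ ≠ r₂ ∧ r₁ ≠ 0 ∧ r₂ ≠ 0
  hRadd : ∀ a b : R, IsZD (a + b) ↔ (IsZD a ∧ IsZD b)
  hB0 : ∀ i (b : B i), IsZD b ↔ b = 0
  hB1 : ∀ i (b : B i), ¬ IsZD b ↔ b = 1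
  hBadd : ∀ i (a b : B i), IsZD (a + b) ↔ (IsZD a ∧ IsZD b)
  hZ0 : ∀ j, IsZD (0 : Z j)
  hZ1 : ∀ j (z : Z j), ¬ IsZD z ↔ z = 1
  hZadd : ∀ j (a b : Z j), IsZD (a + b) ↔ (IsZD a ∧ IsZD b)

lemma mkFacts {m n : ℕ} {R : Type*} [CommSemiring R] [Fintype R]
    (antiR : ∀ a b : R, a + b = 0 → a = 0 ∧ b = 0)
    (hcardR : 3 ≤ Nat.card R) (hzR : Set.ncard {x : R | IsZD x} = 1)
    {B : Fin m → Type*} [∀ i, CommSemiring (B i)]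
    (hB : ∀ i, Nonempty (B i ≃+* BB))
    {Z : Fin n → Type*} [∀ j, CommSemiring (Z j)] [∀ j, Fintype (Z j)]
    (antiZ : ∀ j, ∀ a b : Z j, a + b = 0 → a = 0 ∧ b = 0)
    (closedZ : ∀ j, ∀ a b : Z j, IsZD a → IsZD b → IsZD (a + b))
    (hcardZ : ∀ j, 3 ≤ Nat.card (Z j))
    (hnzZ : ∀ j, Set.ncard {x : Z j | ¬ IsZD x} = 1) :
    Facts m n R B Z := by
  haveI : Nontrivial R := Finite.one_lt_card_iff_nontrivial.mp (by omega)
  haveI : ∀ j, Nontrivial (Z j) :=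
    fun j => Finite.one_lt_card_iff_nontrivial.mp (by have := hcardZ j; omega)
  have hR0 : ∀ r : R, IsZD r ↔ r = 0 := by
    obtain ⟨a, ha⟩ := Set.ncard_eq_one.mp hzR
    have h0 : (0 : R) ∈ {x : R | IsZD x} := isZD_zero
    rw [ha] at h0
    intro r
    have : r ∈ {x : R | IsZD x} ↔ r ∈ ({a} : Set R) := by rw [ha]
    simpa [h0.symm] using this
  have hZ1 : ∀ j (z : Z j), ¬ IsZD z ↔ z = 1 := by
    intro j
    obtain ⟨a, ha⟩ := Set.ncard_eq_one.mp (hnzZ j)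
    have h1 : (1 : Z j) ∈ {x : Z j | ¬ IsZD x} := not_isZD_one
    rw [ha] at h1
    intro z
    have : z ∈ {x : Z j | ¬ IsZD x} ↔ z ∈ ({a} : Set (Z j)) := by rw [ha]
    simpa [h1.symm] using this
  refine ⟨hR0, one_ne_zero, ?_, ?_, ?_, ?_, ?_, ?_, hZ1, ?_⟩
  · haveI := Classical.decEq R
    have hcard : 1 < (Finset.univ.erase (0 : R)).card := by
      rw [Finset.card_erase_of_mem (Finset.mem_univ _), Finset.card_univ]
      have : Nat.card R = Fintype.card R := Nat.card_eq_fintype_card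
      omega
    obtain ⟨a, ha, b, hb, hab⟩ := Finset.one_lt_card.mp hcard
    exact ⟨a, b, hab, (Finset.mem_erase.mp ha).1, (Finset.mem_erase.mp hb).1⟩
  · intro a b
    rw [hR0, hR0, hR0]
    exact ⟨fun h => antiR a b h, fun ⟨h1, h2⟩ => by rw [h1, h2, add_zero]⟩
  · intro i b
    have e := (hB i).some
    rw [← isZD_map_iff e, bb_isZD]
    exact ⟨fun h => e.injective (by rw [h, map_zero]), fun h => by rw [h, map_zero]⟩
  · intro i b
    have e := (hB i).some
    have hcases : e b = 0 ∨ e b = 1 := by cases (e b) with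
      | zero => exact Or.inl rfl
      | one => exact Or.inr rfl
    constructor
    · intro h
      rcases hcases with h0 | h1
      · exfalso
        apply h
        rw [← isZD_map_iff e, h0]
        exact ⟨1, one_ne_zero, zero_mul 1⟩
      · exact e.injective (by rw [h1, map_one])
    · rintro rfl; exact not_isZD_one
  · intro i a b
    have e := (hB i).some
    have hz : ∀ c : B i, IsZD c ↔ e c = 0 := by
      intro c
      rw [← isZD_map_iff e, bb_isZD]
    rw [hz, hz, hz, map_add]
    have := bb_anti (e a) (e b)
    constructor
    · exact fun h => this h
    · rintro ⟨h1, h2⟩; rw [h1, h2, add_zero]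
  · exact fun j => isZD_zero
  · intro j a b
    constructor
    · intro h
      by_contra hc
      rw [not_and_or] at hc
      rcases hc with hc | hc
      · rw [hZ1 j a] at hc
        rw [hc] at h
        exact not_isZD_one_add (antiZ j) b h
      · rw [hZ1 j b] at hc
        rw [hc, add_comm] at h
        exact not_isZD_one_add (antiZ j) a h
    · exact fun ⟨h1, h2⟩ => closedZ j a b h1 h2


section Prod

variable {m n : ℕ} {R : Type*} [CommSemiring R] {B : Fin m → Type*} [∀ i, CommSemiring (B i)]
  {Z : Fin n → Type*} [∀ j, CommSemiring (Z j)]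

lemma isZD_prod (x : R × (∀ i, B i) × (∀ j, Z j)) :
    IsZD x ↔ IsZD x.1 ∨ (∃ i, IsZD (x.2.1 i)) ∨ (∃ j, IsZD (x.2.2 j)) := by
  constructor
  · intro hx
    by_contra hc
    push_neg at hc
    obtain ⟨h1, h2, h3⟩ := hc
    obtain ⟨y, hy, hxy⟩ := hx
    apply hy
    have e1 : x.1 * y.1 = 0 := congrArg Prod.fst hxy
    have e2 : ∀ i, x.2.1 i * y.2.1 i = 0 := fun i => congrFun (congrArg (fun t => t.2.1) hxy) i
    have e3 : ∀ j, x.2.2 j * y.2.2 j = 0 := fun j => congrFun (congrArg (fun t => t.2.2) hxy) j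
    refine Prod.ext (not_isZD_iff.mp h1 _ e1) (Prod.ext ?_ ?_)
    · exact funext fun i => not_isZD_iff.mp (h2 i) _ (e2 i)
    · exact funext fun j => not_isZD_iff.mp (h3 j) _ (e3 j)
  · rintro (⟨w, hw, hxw⟩ | ⟨i, w, hw, hxw⟩ | ⟨j, w, hw, hxw⟩)
    · refine ⟨(w, 0, 0), fun h => hw (congrArg Prod.fst h), ?_⟩
      refine Prod.ext hxw (Prod.ext ?_ ?_) <;> exact mul_zero _
    · classical
      refine ⟨(0, Pi.single i w, 0), fun h => hw ?_, ?_⟩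
      · have := congrFun (congrArg (fun t => t.2.1) h) i
        simpa using this
      · refine Prod.ext (mul_zero _) (Prod.ext ?_ (mul_zero _))
        funext k
        by_cases hk : k = i
        · subst hk; simpa using hxw
        · simp [Pi.single_eq_of_ne hk]
    · classical
      refine ⟨(0, 0, Pi.single j w), fun h => hw ?_, ?_⟩
      · have := congrFun (congrArg (fun t => t.2.2) h) j
        simpa using this
      · refine Prod.ext (mul_zero _) (Prod.ext (mul_zero _) ?_)
        funext k
        by_cases hk : k = j
        · subst hk; simpa using hxw
        · simp [Pi.single_eq_of_ne hk]

lemma isZD_add (F : Facts m n R B Z) (x y : R × (∀ i, B i) × (∀ j, Z j)) :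
    IsZD (x + y) ↔ (IsZD x.1 ∧ IsZD y.1) ∨ (∃ i, IsZD (x.2.1 i) ∧ IsZD (y.2.1 i)) ∨
      (∃ j, IsZD (x.2.2 j) ∧ IsZD (y.2.2 j)) := by
  rw [isZD_prod]
  simp only [Prod.fst_add, Prod.snd_add, Pi.add_apply, F.hRadd, F.hBadd, F.hZadd]

end Prod



lemma decide_eq_iff {p : Prop} [Decidable p] {b : Bool} : (decide p = b) ↔ (p ↔ b = true) := by
  cases b <;> simp

section Pat

variable {m n : ℕ} {R : Type*} [CommSemiring R] {B : Fin m → Type*} [∀ i, CommSemiring (B i)]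
  {Z : Fin n → Type*} [∀ j, CommSemiring (Z j)]

/-- The pattern of an element: which coordinates are zero-divisors. -/
noncomputable def pat (x : R × (∀ i, B i) × (∀ j, Z j)) :
    Bool × (Fin m → Bool) × (Fin n → Bool) :=
  (@decide (IsZD x.1) (Classical.propDecidable _),
   fun i => @decide (IsZD (x.2.1 i)) (Classical.propDecidable _),
   fun j => @decide (IsZD (x.2.2 j)) (Classical.propDecidable _))

lemma pat_eq_iff {x : R × (∀ i, B i) × (∀ j, Z j)} {p : Bool × (Fin m → Bool) × (Fin n → Bool)} :
    pat x = p ↔ ((IsZD x.1 ↔ p.1 = true) ∧ (∀ i, IsZD (x.2.1 i) ↔ p.2.1 i = true) ∧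
      (∀ j, IsZD (x.2.2 j) ↔ p.2.2 j = true)) := by
  rw [pat, Prod.ext_iff, Prod.ext_iff, funext_iff, funext_iff]
  simp only [decide_eq_iff]

/-- Adjacency pattern relation. -/
def Apat {m n : ℕ} (p q : Bool × (Fin m → Bool) × (Fin n → Bool)) : Prop :=
  (p.1 = true ∧ q.1 = true) ∨ (∃ i, p.2.1 i = true ∧ q.2.1 i = true) ∨
    (∃ j, p.2.2 j = true ∧ q.2.2 j = true)

def pbot (m n : ℕ) : Bool × (Fin m → Bool) × (Fin n → Bool) :=
  (false, fun _ => false, fun _ => false)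

def peR (m n : ℕ) : Bool × (Fin m → Bool) × (Fin n → Bool) :=
  (true, fun _ => false, fun _ => false)

def ptop (m n : ℕ) : Bool × (Fin m → Bool) × (Fin n → Bool) :=
  (true, fun _ => true, fun _ => true)

def pq0 (m n : ℕ) : Bool × (Fin m → Bool) × (Fin n → Bool) :=
  (false, fun _ => true, fun _ => true)

def eB {m n : ℕ} (i : Fin m) : Bool × (Fin m → Bool) × (Fin n → Bool) :=
  (false, fun k => decide (k = i), fun _ => false)

def eZ {m n : ℕ} (j : Fin n) : Bool × (Fin m → Bool) × (Fin n → Bool) :=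
  (false, fun _ => false, fun k => decide (k = j))

lemma apat_eB {p : Bool × (Fin m → Bool) × (Fin n → Bool)} (i : Fin m) :
    Apat p (eB i) ↔ p.2.1 i = true := by
  simp [Apat, eB]

lemma apat_eZ {p : Bool × (Fin m → Bool) × (Fin n → Bool)} (j : Fin n) :
    Apat p (eZ j) ↔ p.2.2 j = true := by
  simp [Apat, eZ]

lemma apat_eR {p : Bool × (Fin m → Bool) × (Fin n → Bool)} :
    Apat p (peR m n) ↔ p.1 = true := by
  simp [Apat, peR]

lemma isZD_iff_pat_ne_bot (x : R × (∀ i, B i) × (∀ j, Z j)) :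
    IsZD x ↔ pat x ≠ pbot m n := by
  rw [isZD_prod]
  constructor
  · rintro (h | ⟨i, h⟩ | ⟨j, h⟩) hbot
    · have := (pat_eq_iff.mp hbot).1
      simp [pbot] at this
      exact this h
    · have := (pat_eq_iff.mp hbot).2.1 i
      simp [pbot] at this
      exact this h
    · have := (pat_eq_iff.mp hbot).2.2 j
      simp [pbot] at this
      exact this h
  · intro h
    by_contra hc
    push_neg at hc
    obtain ⟨h1, h2, h3⟩ := hc
    apply h
    rw [pat_eq_iff]
    refine ⟨?_, fun i => ?_, fun j => ?_⟩ <;> simp [pbot, h1, h2, h3]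

lemma apat_iff (F : Facts m n R B Z) (x y : R × (∀ i, B i) × (∀ j, Z j)) :
    Apat (pat x) (pat y) ↔ IsZD (x + y) := by
  rw [isZD_add F]
  simp [Apat, pat]

def xOf (p : Bool × (Fin m → Bool) × (Fin n → Bool)) (r : R) : R × (∀ i, B i) × (∀ j, Z j) :=
  (if p.1 then 0 else r, fun i => if p.2.1 i then 0 else 1, fun j => if p.2.2 j then 0 else 1)

lemma pat_xOf (F : Facts m n R B Z) {p : Bool × (Fin m → Bool) × (Fin n → Bool)} {r : R}
    (hr : r ≠ 0) : pat (xOf (B := B) (Z := Z) p r) = p := by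
  rw [pat_eq_iff]
  refine ⟨?_, fun i => ?_, fun j => ?_⟩
  · cases hp : p.1 <;> simp [xOf, hp, F.hR0, hr]
  · have h10 : (1 : B i) ≠ 0 := fun h => not_isZD_one ((F.hB0 i 1).mpr h)
    cases hp : p.2.1 i <;> simp [xOf, hp, F.hB0, h10]
  · cases hp : p.2.2 j <;> simp [xOf, hp, F.hZ0 j, not_isZD_one]

lemma eq_of_pat_eR (F : Facts m n R B Z) {x : R × (∀ i, B i) × (∀ j, Z j)}
    (h : pat x = peR m n) : x = (0, 1, 1) := by
  obtain ⟨h1, h2, h3⟩ := pat_eq_iff.mp h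
  refine Prod.ext ?_ (Prod.ext ?_ ?_)
  · exact (F.hR0 x.1).mp (h1.mpr (by simp [peR]))
  · funext i
    have := h2 i
    simp [peR] at this
    exact (F.hB1 i _).mp this
  · funext j
    have := h3 j
    simp [peR] at this
    exact (F.hZ1 j _).mp this

end Pat


section Graph

variable {m n : ℕ} {R : Type*} [CommSemiring R] {B : Fin m → Type*} [∀ i, CommSemiring (B i)]
  {Z : Fin n → Type*} [∀ j, CommSemiring (Z j)]

lemma gamma1_adj (u v : {x : R × (∀ i, B i) × (∀ j, Z j) // IsZD x}) :
    (gamma1 (R × (∀ i, B i) × (∀ j, Z j))).Adj u v ↔ u.1 ≠ v.1 ∧ IsZD (u.1 + v.1) :=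
  Iff.rfl

lemma gamma1_adj' (F : Facts m n R B Z) (u v : {x : R × (∀ i, B i) × (∀ j, Z j) // IsZD x}) :
    (gamma1 (R × (∀ i, B i) × (∀ j, Z j))).Adj u v ↔ u ≠ v ∧ Apat (pat u.1) (pat v.1) := by
  rw [gamma1_adj, apat_iff F, Subtype.coe_ne_coe]

lemma isZD_zero_S (F : Facts m n R B Z) : IsZD (0 : R × (∀ i, B i) × (∀ j, Z j)) :=
  (isZD_prod _).mpr (Or.inl ((F.hR0 0).mpr rfl))

lemma gamma1_dist_two (F : Facts m n R B Z) (u v : {x : R × (∀ i, B i) × (∀ j, Z j) // IsZD x})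
    (huv : u ≠ v) (h : ¬ (gamma1 (R × (∀ i, B i) × (∀ j, Z j))).Adj u v) :
    (gamma1 (R × (∀ i, B i) × (∀ j, Z j))).dist u v = 2 := by
  set G := gamma1 (R × (∀ i, B i) × (∀ j, Z j)) with hG
  set z : {x : R × (∀ i, B i) × (∀ j, Z j) // IsZD x} := ⟨0, isZD_zero_S F⟩ with hz
  by_cases hu : u = z
  · exfalso
    apply h
    rw [gamma1_adj]
    constructor
    · intro hh
      exact huv (Subtype.ext hh)
    · rw [hu]
      simpa [hz] using v.2
  by_cases hv : v = z
  · exfalso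
    apply h
    rw [gamma1_adj]
    constructor
    · intro hh
      exact huv (Subtype.ext hh)
    · rw [hv]
      simpa [hz] using u.2
  have hu1 : u.1 ≠ 0 := fun hh => hu (Subtype.ext hh)
  have hv1 : v.1 ≠ 0 := fun hh => hv (Subtype.ext hh)
  have a1 : G.Adj u z := by
    rw [gamma1_adj]
    exact ⟨by simpa using hu1, by simpa [hz] using u.2⟩
  have a2 : G.Adj z v := by
    rw [gamma1_adj]
    exact ⟨by simpa using (Ne.symm hv1), by simpa [hz] using v.2⟩
  have hle : G.dist u v ≤ 2 := by
    have := SimpleGraph.dist_le (SimpleGraph.Walk.cons a1 (SimpleGraph.Walk.cons a2 SimpleGraph.Walk.nil))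
    simpa using this
  have hpos : 0 < G.dist u v :=
    SimpleGraph.Reachable.pos_dist_of_ne
      ⟨SimpleGraph.Walk.cons a1 (SimpleGraph.Walk.cons a2 SimpleGraph.Walk.nil)⟩ huv
  have hne1 : G.dist u v ≠ 1 := fun hh => h (SimpleGraph.dist_eq_one_iff_adj.mp hh)
  omega

end Graph


lemma bool_iff_of_ne {a b : Bool} (h : a ≠ b) : a = true ↔ ¬ b = true := by
  cases a <;> cases b <;> simp_all

set_option maxHeartbeats 1000000 in
theorem main {m n : ℕ} (hmn : 1 ≤ m + n) {R : Type*} [CommSemiring R] [Finite R]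
    {B : Fin m → Type*} [∀ i, CommSemiring (B i)] [∀ i, Finite (B i)]
    {Z : Fin n → Type*} [∀ j, CommSemiring (Z j)] [∀ j, Finite (Z j)]
    (F : Facts m n R B Z) :
    metricDim (gamma1 (R × (∀ i, B i) × (∀ j, Z j))) + (2 ^ (m + n + 1) - 2) =
        Nat.card {x : R × (∀ i, B i) × (∀ j, Z j) // IsZD x} ∧
      2 ^ (m + n + 1) - 2 ≤ Nat.card {x : R × (∀ i, B i) × (∀ j, Z j) // IsZD x} := by
  classical
  obtain ⟨r₁, r₂, hr12, hr1, hr2⟩ := F.hR2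
  set G := gamma1 (R × (∀ i, B i) × (∀ j, Z j)) with hGdef
  set N := Nat.card {x : R × (∀ i, B i) × (∀ j, Z j) // IsZD x} with hNdef
  set K := 2 ^ (m + n + 1) with hKdef
  -- pattern cardinality
  have hPcard : Nat.card (Bool × (Fin m → Bool) × (Fin n → Bool)) = K := by
    rw [hKdef]
    simp only [Nat.card_eq_fintype_card, Fintype.card_prod, Fintype.card_fun, Fintype.card_bool,
      Fintype.card_fin]
    rw [pow_succ, pow_add]
    ring
  -- every vertex pattern is not pbot
  have hbotmiss : ∀ v : {x : R × (∀ i, B i) × (∀ j, Z j) // IsZD x}, pat v.1 ≠ pbot m n :=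
    fun v => (isZD_iff_pat_ne_bot v.1).mp v.2
  -- the special vertex vR
  have hvRzd : IsZD ((0, 1, 1) : R × (∀ i, B i) × (∀ j, Z j)) :=
    (isZD_prod _).mpr (Or.inl ((F.hR0 0).mpr rfl))
  set vR : {x : R × (∀ i, B i) × (∀ j, Z j) // IsZD x} := ⟨(0, 1, 1), hvRzd⟩ with hvRdef
  have hvRpat : pat vR.1 = peR m n := by
    rw [pat_eq_iff]
    refine ⟨?_, fun i => ?_, fun j => ?_⟩
    · simp [peR, F.hR0, hvRdef]
    · simp [peR, not_isZD_one, hvRdef]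
    · simp [peR, not_isZD_one, hvRdef]
  have hvRuniq : ∀ v : {x : R × (∀ i, B i) × (∀ j, Z j) // IsZD x},
      pat v.1 = peR m n → v = vR := by
    intro v hv
    exact Subtype.ext (eq_of_pat_eR F hv)
  -- pattern inequalities
  have hbot_ne_peR : pbot m n ≠ peR m n := by
    intro h
    have := congrArg Prod.fst h
    simp [pbot, peR] at this
  have hbot_ne_ptop : pbot m n ≠ ptop m n := by
    intro h
    have := congrArg Prod.fst h
    simp [pbot, ptop] at this
  have hbot_ne_pq0 : pbot m n ≠ pq0 m n := by
    intro h
    rcases Nat.lt_or_ge 0 m with hm | hm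
    · have := congrFun (congrArg (fun t => t.2.1) h) ⟨0, hm⟩
      simp [pbot, pq0] at this
    · have hn : 0 < n := by omega
      have := congrFun (congrArg (fun t => t.2.2) h) ⟨0, hn⟩
      simp [pbot, pq0] at this
  -- key dist comparison: if patterns of x,y relate differently to pattern of w, dists differ
  have hkey : ∀ x y w : {x : R × (∀ i, B i) × (∀ j, Z j) // IsZD x}, w ≠ x → w ≠ y →
      (Apat (pat x.1) (pat w.1) ↔ ¬ Apat (pat y.1) (pat w.1)) →
      G.dist x w ≠ G.dist y w := by
    intro x y w hwx hwy hiff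
    by_cases hA : Apat (pat x.1) (pat w.1)
    · have hAy : ¬ Apat (pat y.1) (pat w.1) := hiff.mp hA
      have d1 : G.dist x w = 1 :=
        SimpleGraph.dist_eq_one_iff_adj.mpr ((gamma1_adj' F x w).mpr ⟨hwx.symm, hA⟩)
      have d2 : G.dist y w = 2 := by
        refine gamma1_dist_two F y w hwy.symm ?_
        intro hadj
        exact hAy ((gamma1_adj' F y w).mp hadj).2
      omega
    · have hAy : Apat (pat y.1) (pat w.1) := by
        by_contra hc
        exact hA (hiff.mpr hc)
      have d1 : G.dist y w = 1 :=
        SimpleGraph.dist_eq_one_iff_adj.mpr ((gamma1_adj' F y w).mpr ⟨hwy.symm, hAy⟩)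
      have d2 : G.dist x w = 2 := by
        refine gamma1_dist_two F x w hwx.symm ?_
        intro hadj
        exact hA ((gamma1_adj' F x w).mp hadj).2
      omega
  -- twins have the same distances
  have htwin : ∀ x y w : {x : R × (∀ i, B i) × (∀ j, Z j) // IsZD x}, w ≠ x → w ≠ y →
      pat x.1 = pat y.1 → G.dist x w = G.dist y w := by
    intro x y w hwx hwy hpat
    by_cases hA : Apat (pat x.1) (pat w.1)
    · rw [SimpleGraph.dist_eq_one_iff_adj.mpr ((gamma1_adj' F x w).mpr ⟨hwx.symm, hA⟩),
        SimpleGraph.dist_eq_one_iff_adj.mpr ((gamma1_adj' F y w).mpr ⟨hwy.symm, hpat ▸ hA⟩)]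
    · rw [gamma1_dist_two F x w hwx.symm (fun hadj => hA ((gamma1_adj' F x w).mp hadj).2),
        gamma1_dist_two F y w hwy.symm
          (fun hadj => hA (hpat ▸ ((gamma1_adj' F y w).mp hadj).2))]
  -- Apat with top pattern
  have hApat_top : ∀ q : Bool × (Fin m → Bool) × (Fin n → Bool), q ≠ pbot m n →
      Apat (ptop m n) q := by
    intro q hq
    by_cases h1 : q.1 = true
    · exact Or.inl ⟨rfl, h1⟩
    by_cases h2 : ∃ i, q.2.1 i = true
    · obtain ⟨i, hi⟩ := h2
      exact Or.inr (Or.inl ⟨i, rfl, hi⟩)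
    by_cases h3 : ∃ j, q.2.2 j = true
    · obtain ⟨j, hj⟩ := h3
      exact Or.inr (Or.inr ⟨j, rfl, hj⟩)
    exfalso
    apply hq
    push_neg at h2 h3
    refine Prod.ext (by simpa [pbot] using h1) (Prod.ext (funext fun i => by simpa [pbot] using h2 i)
      (funext fun j => by simpa [pbot] using h3 j))
  -- Apat with pq0 pattern
  have hApat_pq0 : ∀ q : Bool × (Fin m → Bool) × (Fin n → Bool), q ≠ pbot m n → q ≠ peR m n →
      Apat (pq0 m n) q := by
    intro q hq hq'
    by_cases h2 : ∃ i, q.2.1 i = true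
    · obtain ⟨i, hi⟩ := h2
      exact Or.inr (Or.inl ⟨i, rfl, hi⟩)
    by_cases h3 : ∃ j, q.2.2 j = true
    · obtain ⟨j, hj⟩ := h3
      exact Or.inr (Or.inr ⟨j, rfl, hj⟩)
    exfalso
    push_neg at h2 h3
    cases h1 : q.1 with
    | false =>
      apply hq
      refine Prod.ext (by simpa [pbot] using h1) (Prod.ext (funext fun i => by simpa [pbot] using h2 i)
        (funext fun j => by simpa [pbot] using h3 j))
    | true =>
      apply hq'
      refine Prod.ext (by simpa [peR] using h1) (Prod.ext (funext fun i => by simpa [peR] using h2 i)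
        (funext fun j => by simpa [peR] using h3 j))
  -- the chosen transversal
  have hvert : ∀ p : Bool × (Fin m → Bool) × (Fin n → Bool), p ≠ pbot m n →
      ∀ r : R, r ≠ 0 → IsZD (xOf (B := B) (Z := Z) p r) := by
    intro p hp r hr
    rw [isZD_iff_pat_ne_bot, pat_xOf F hr]
    exact hp
  set g : (Bool × (Fin m → Bool) × (Fin n → Bool)) → {x : R × (∀ i, B i) × (∀ j, Z j) // IsZD x} :=
    fun p => if h : IsZD (xOf (B := B) (Z := Z) p r₁) then ⟨_, h⟩ else ⟨0, isZD_zero_S F⟩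
    with hgdef
  have hg : ∀ p : Bool × (Fin m → Bool) × (Fin n → Bool), p ≠ pbot m n →
      (g p).1 = xOf (B := B) (Z := Z) p r₁ ∧ pat (g p).1 = p := by
    intro p hp
    have h := hvert p hp r₁ hr1
    have e : g p = ⟨xOf (B := B) (Z := Z) p r₁, h⟩ := by
      rw [hgdef]
      exact dif_pos h
    rw [e]
    exact ⟨rfl, pat_xOf F hr1⟩
  set D : Set (Bool × (Fin m → Bool) × (Fin n → Bool)) :=
    Set.univ \ {pbot m n, peR m n} with hDdef
  set T : Set {x : R × (∀ i, B i) × (∀ j, Z j) // IsZD x} := g '' D with hTdef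
  have hDmem : ∀ p, p ∈ D ↔ p ≠ pbot m n ∧ p ≠ peR m n := by
    intro p
    simp [hDdef]
  have hginj : Set.InjOn g D := by
    intro p hp q hq hpq
    have h1 := (hg p ((hDmem p).mp hp).1).2
    have h2 := (hg q ((hDmem q).mp hq).1).2
    rw [← h1, ← h2, hpq]
  have hDcard : D.ncard = K - 2 := by
    rw [hDdef, Set.ncard_diff (Set.subset_univ _), Set.ncard_univ, hPcard,
      Set.ncard_pair hbot_ne_peR]
  have hTcard : T.ncard = K - 2 := by
    rw [hTdef, Set.ncard_image_of_injOn hginj, hDcard]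
  have hTN : T.ncard ≤ N := by
    calc T.ncard ≤ (Set.univ : Set {x : R × (∀ i, B i) × (∀ j, Z j) // IsZD x}).ncard :=
          Set.ncard_le_ncard (Set.subset_univ _) Set.finite_univ
      _ = N := Set.ncard_univ _
  have hKN : K - 2 ≤ N := hTcard ▸ hTN
  -- properties of T
  have hTmem : ∀ v ∈ T, pat v.1 ∈ D ∧ v.1 = xOf (B := B) (Z := Z) (pat v.1) r₁ := by
    rintro v ⟨p, hp, rfl⟩
    obtain ⟨h1, h2⟩ := hg p ((hDmem p).mp hp).1
    rw [h2]
    exact ⟨hp, h1⟩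
  have hvRT : vR ∉ T := by
    intro hv
    have := ((hDmem _).mp (hTmem vR hv).1).2
    rw [hvRpat] at this
    exact this rfl
  -- a second vertex outside T for any realizable pattern with false first bit
  have exvert : ∀ p : Bool × (Fin m → Bool) × (Fin n → Bool), p.1 = false → p ≠ pbot m n →
      ∃ w : {x : R × (∀ i, B i) × (∀ j, Z j) // IsZD x}, w ∉ T ∧ pat w.1 = p := by
    intro p hp1 hpbot
    refine ⟨⟨xOf (B := B) (Z := Z) p r₂, hvert p hpbot r₂ hr2⟩, ?_, pat_xOf F hr2⟩
    intro hmem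
    obtain ⟨hpd, hval⟩ := hTmem _ hmem
    simp only at hval
    rw [pat_xOf F hr2] at hval
    have := congrArg Prod.fst hval
    rw [xOf, xOf] at this
    simp only [hp1] at this
    simp at this
    exact hr12 this.symm
  -- upper bound: Tᶜ is resolving
  have hres : IsResolving G Tᶜ := by
    intro x y hxy
    by_contra hne
    have hxT : x ∈ T := by
      by_contra hx
      have h0 := hxy x hx
      rw [SimpleGraph.dist_self] at h0
      by_cases hadj : G.Adj y x
      · rw [SimpleGraph.dist_eq_one_iff_adj.mpr hadj] at h0
        omega
      · rw [gamma1_dist_two F y x (Ne.symm hne) hadj] at h0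
        omega
    have hyT : y ∈ T := by
      by_contra hy
      have h0 := hxy y hy
      rw [SimpleGraph.dist_self] at h0
      by_cases hadj : G.Adj x y
      · rw [SimpleGraph.dist_eq_one_iff_adj.mpr hadj] at h0
        omega
      · rw [gamma1_dist_two F x y hne hadj] at h0
        omega
    obtain ⟨hpD, _⟩ := hTmem x hxT
    obtain ⟨hqD, _⟩ := hTmem y hyT
    set p := pat x.1 with hpdef
    set q := pat y.1 with hqdef
    have hpq : p ≠ q := by
      intro h
      apply hne
      obtain ⟨px, hpx, hgx⟩ := hxT
      obtain ⟨py, hpy, hgy⟩ := hyT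
      have e1 : px = p := by rw [hpdef, ← hgx, (hg px ((hDmem px).mp hpx).1).2]
      have e2 : py = q := by rw [hqdef, ← hgy, (hg py ((hDmem py).mp hpy).1).2]
      rw [← hgx, ← hgy, e1, e2, h]
    have hsplit : p.1 ≠ q.1 ∨ (∃ i, p.2.1 i ≠ q.2.1 i) ∨ (∃ j, p.2.2 j ≠ q.2.2 j) := by
      by_contra hc
      push_neg at hc
      obtain ⟨h1, h2, h3⟩ := hc
      exact hpq (Prod.ext h1 (Prod.ext (funext h2) (funext h3)))
    have hfin : ∀ w : {x : R × (∀ i, B i) × (∀ j, Z j) // IsZD x}, w ∉ T →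
        (Apat p (pat w.1) ↔ ¬ Apat q (pat w.1)) → False := by
      intro w hw hiff
      have hwx : w ≠ x := fun h => hw (h ▸ hxT)
      have hwy : w ≠ y := fun h => hw (h ▸ hyT)
      exact hkey x y w hwx hwy hiff (hxy w hw)
    rcases hsplit with h | ⟨i, h⟩ | ⟨j, h⟩
    · apply hfin vR hvRT
      rw [hvRpat, apat_eR, apat_eR]
      exact bool_iff_of_ne h
    · have hne_bot : (eB i : Bool × (Fin m → Bool) × (Fin n → Bool)) ≠ pbot m n := by
        intro hh
        have := congrFun (congrArg (fun t => t.2.1) hh) i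
        simp [eB, pbot] at this
      obtain ⟨w, hw, hwpat⟩ := exvert (eB i) rfl hne_bot
      apply hfin w hw
      rw [hwpat, apat_eB, apat_eB]
      exact bool_iff_of_ne h
    · have hne_bot : (eZ j : Bool × (Fin m → Bool) × (Fin n → Bool)) ≠ pbot m n := by
        intro hh
        have := congrFun (congrArg (fun t => t.2.2) hh) j
        simp [eZ, pbot] at this
      obtain ⟨w, hw, hwpat⟩ := exvert (eZ j) rfl hne_bot
      apply hfin w hw
      rw [hwpat, apat_eZ, apat_eZ]
      exact bool_iff_of_ne h
  -- membership: Tᶜ is a finite resolving set of size N - (K - 2)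
  have hcompl : T.ncard + Tᶜ.ncard = N := by
    rw [hNdef]
    exact Set.ncard_add_ncard_compl T
  have hmem : N - (K - 2) ∈ {k | ∃ W : Set {x : R × (∀ i, B i) × (∀ j, Z j) // IsZD x},
      W.Finite ∧ W.ncard = k ∧ IsResolving G W} :=
    ⟨Tᶜ, Set.toFinite _, by omega, hres⟩
  -- lower bound for any resolving set
  have hlow : ∀ k ∈ {k | ∃ W : Set {x : R × (∀ i, B i) × (∀ j, Z j) // IsZD x},
      W.Finite ∧ W.ncard = k ∧ IsResolving G W}, N - (K - 2) ≤ k := by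
    rintro k ⟨W, hWf, rfl, hWr⟩
    have hWc : W.ncard + Wᶜ.ncard = N := by
      rw [hNdef]
      exact Set.ncard_add_ncard_compl W
    suffices h : Wᶜ.ncard ≤ K - 2 by omega
    have hinj : Set.InjOn (fun v : {x : R × (∀ i, B i) × (∀ j, Z j) // IsZD x} => pat v.1) Wᶜ := by
      intro a ha c hc hac
      simp only at hac
      apply hWr
      intro w hw
      have hwa : w ≠ a := fun h => ha (h ▸ hw)
      have hwc : w ≠ c := fun h => hc (h ▸ hw)
      exact htwin a c w hwa hwc hac
    have hb : ∃ b, pbot m n ≠ b ∧ ∀ v ∈ Wᶜ, pat v.1 ≠ b := by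
      by_cases hvW : vR ∈ W
      · refine ⟨peR m n, hbot_ne_peR, ?_⟩
        intro v hv hpat
        exact hv (hvRuniq v hpat ▸ hvW)
      · by_cases htopin : ∃ v ∈ Wᶜ, pat v.1 = ptop m n
        · obtain ⟨x, hx, hxp⟩ := htopin
          refine ⟨pq0 m n, hbot_ne_pq0, ?_⟩
          intro y hy hyp
          have hxy : x ≠ y := by
            intro h
            rw [h, hyp] at hxp
            have := congrArg Prod.fst hxp
            simp [ptop, pq0] at this
          apply hxy
          apply hWr
          intro w hw
          have hwx : w ≠ x := fun h => hx (h ▸ hw)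
          have hwy : w ≠ y := fun h => hy (h ▸ hw)
          have hAx : Apat (pat x.1) (pat w.1) := by
            rw [hxp]
            exact hApat_top _ (hbotmiss w)
          have hAy : Apat (pat y.1) (pat w.1) := by
            rw [hyp]
            refine hApat_pq0 _ (hbotmiss w) ?_
            intro hh
            exact hvW (hvRuniq w hh ▸ hw)
          rw [SimpleGraph.dist_eq_one_iff_adj.mpr ((gamma1_adj' F x w).mpr ⟨Ne.symm hwx, hAx⟩),
            SimpleGraph.dist_eq_one_iff_adj.mpr ((gamma1_adj' F y w).mpr ⟨Ne.symm hwy, hAy⟩)]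
        · exact ⟨ptop m n, hbot_ne_ptop, fun v hv hp => htopin ⟨v, hv, hp⟩⟩
    obtain ⟨b, hbne, hbmiss⟩ := hb
    have himg : (fun v : {x : R × (∀ i, B i) × (∀ j, Z j) // IsZD x} => pat v.1) '' Wᶜ ⊆
        Set.univ \ {pbot m n, b} := by
      rintro _ ⟨v, hv, rfl⟩
      refine ⟨trivial, ?_⟩
      simp only [Set.mem_insert_iff, Set.mem_singleton_iff]
      push_neg
      exact ⟨hbotmiss v, hbmiss v hv⟩
    calc Wᶜ.ncard
        = ((fun v : {x : R × (∀ i, B i) × (∀ j, Z j) // IsZD x} => pat v.1) '' Wᶜ).ncard :=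
          (Set.ncard_image_of_injOn hinj).symm
      _ ≤ (Set.univ \ {pbot m n, b}).ncard := Set.ncard_le_ncard himg (Set.toFinite _)
      _ = K - 2 := by
          rw [Set.ncard_diff (Set.subset_univ _), Set.ncard_univ, hPcard, Set.ncard_pair hbne]
  have hdim : metricDim G = N - (K - 2) := by
    rw [metricDim]
    exact le_antisymm (Nat.sInf_le hmem) (le_csInf ⟨_, hmem⟩ hlow)
  exact ⟨by omega, hKN⟩


end S16

theorem stmt16 (m n : ℕ) (hmn : 1 ≤ m + n)
    {R : Type*} [CommSemiring R] [Fintype R]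
    (antiR : ∀ a b : R, a + b = 0 → a = 0 ∧ b = 0)
    (hcardR : 3 ≤ Nat.card R) (hzR : Set.ncard {x : R | IsZD x} = 1)
    {B : Fin m → Type*} [∀ i, CommSemiring (B i)]
    (hB : ∀ i, Nonempty (B i ≃+* BB))
    {Z : Fin n → Type*} [∀ j, CommSemiring (Z j)] [∀ j, Fintype (Z j)]
    (antiZ : ∀ j, ∀ a b : Z j, a + b = 0 → a = 0 ∧ b = 0)
    (closedZ : ∀ j, ∀ a b : Z j, IsZD a → IsZD b → IsZD (a + b))
    (hcardZ : ∀ j, 3 ≤ Nat.card (Z j))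
    (hnzZ : ∀ j, Set.ncard {x : Z j | ¬ IsZD x} = 1) :
    (metricDim (gamma1 (R × (∀ i, B i) × (∀ j, Z j))) : ℤ) =
        (Nat.card (R × (∀ i, B i) × (∀ j, Z j)) : ℤ) - 2 ^ (m + n + 1) - Nat.card R + 3 ∧
      (metricDim (gamma1 (R × (∀ i, B i) × (∀ j, Z j))) : ℤ) =
        (Nat.card {x : R × (∀ i, B i) × (∀ j, Z j) // IsZD x} : ℤ) - 2 ^ (m + n + 1) + 2 := by
  classical
  haveI : ∀ i, Fintype (B i) := fun i => Fintype.ofEquiv BB ((hB i).some).symm.toEquiv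
  have F := S16.mkFacts antiR hcardR hzR hB antiZ closedZ hcardZ hnzZ
  haveI : ∀ i, Finite (B i) := fun i => Finite.of_fintype _
  obtain ⟨hdim, hKN⟩ := S16.main hmn F
  -- counting non-zero-divisors
  have hnzd : ∀ x : R × (∀ i, B i) × (∀ j, Z j), ¬ IsZD x →
      (¬ IsZD x.1 ∧ (∀ i, ¬ IsZD (x.2.1 i)) ∧ (∀ j, ¬ IsZD (x.2.2 j))) := by
    intro x hx
    rw [S16.isZD_prod] at hx
    push_neg at hx
    exact hx
  have e : {x : R × (∀ i, B i) × (∀ j, Z j) // ¬ IsZD x} ≃ {r : R // ¬ r = 0} :=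
    { toFun := fun x => ⟨x.1.1, fun h => x.2 ((S16.isZD_prod x.1).mpr
        (Or.inl ((F.hR0 _).mpr h)))⟩
      invFun := fun r => ⟨(r.1, 1, 1), fun h => by
        rcases (S16.isZD_prod _).mp h with h | ⟨i, h⟩ | ⟨j, h⟩
        · exact r.2 ((F.hR0 _).mp h)
        · exact S16.not_isZD_one h
        · exact S16.not_isZD_one h⟩
      left_inv := fun x => by
        obtain ⟨h1, h2, h3⟩ := hnzd x.1 x.2
        refine Subtype.ext (Prod.ext rfl (Prod.ext ?_ ?_))
        · exact (funext fun i => ((F.hB1 i _).mp (h2 i))).symm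
        · exact (funext fun j => ((F.hZ1 j _).mp (h3 j))).symm
      right_inv := fun r => rfl }
  have hnz1 : Nat.card {x : R × (∀ i, B i) × (∀ j, Z j) // ¬ IsZD x} =
      Nat.card {r : R // ¬ r = 0} := Nat.card_congr e
  have hnz2 : Nat.card {r : R // ¬ r = 0} = ({(0 : R)}ᶜ : Set R).ncard :=
    Nat.card_coe_set_eq _
  have hnz3 : ({(0 : R)} : Set R).ncard + ({(0 : R)}ᶜ : Set R).ncard = Nat.card R :=
    Set.ncard_add_ncard_compl _
  have hnz4 : ({(0 : R)} : Set R).ncard = 1 := Set.ncard_singleton _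
  have hsum1 : ({x : R × (∀ i, B i) × (∀ j, Z j) | IsZD x}).ncard +
      ({x : R × (∀ i, B i) × (∀ j, Z j) | IsZD x}ᶜ).ncard =
      Nat.card (R × (∀ i, B i) × (∀ j, Z j)) := Set.ncard_add_ncard_compl _
  have hsum2 : Nat.card {x : R × (∀ i, B i) × (∀ j, Z j) // IsZD x} =
      ({x : R × (∀ i, B i) × (∀ j, Z j) | IsZD x}).ncard := Nat.card_coe_set_eq _
  have hsum3 : Nat.card {x : R × (∀ i, B i) × (∀ j, Z j) // ¬ IsZD x} =
      ({x : R × (∀ i, B i) × (∀ j, Z j) | IsZD x}ᶜ).ncard := Nat.card_coe_set_eq _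
  have hcast : (((2 : ℕ) ^ (m + n + 1) : ℕ) : ℤ) = (2 : ℤ) ^ (m + n + 1) := by
    push_cast
    ring
  rw [← hcast]
  have hK2 : 2 ≤ 2 ^ (m + n + 1) := by
    have : (2 : ℕ) ^ 1 ≤ 2 ^ (m + n + 1) := Nat.pow_le_pow_right (by norm_num) (by omega)
    simpa using this
  generalize hKgen : (2 : ℕ) ^ (m + n + 1) = K at hdim hKN hK2 ⊢
  refine ⟨?_, ?_⟩ <;> omega
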